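/- Let A be a unital C*-algebra, H and K complex Hilbert spaces, π : A → B(K) a unital *-homomorphism, and V : H → K a linear isometry such that the linear span of {π(a) V ξ : a ∈ A, ξ ∈ H} is dense in K. Let Φ, Ψ : A → B(H) be completely positive maps with Φ(a) = V* π(a) V for all a ∈ A, and suppose Φ − Ψ is completely positive. Then there exists a unique operator X ∈ B(K) commuting with π(a) for every a ∈ A such that Ψ(a) = V* X π(a) V for all a ∈ A; moreover 0 ≤ X ≤ I. -/

import Mathlib

open scoped ComplexOrder
open ContinuousLinearMap

set_option synthInstance.maxHeartbeats 1000000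
set_option maxHeartbeats 1000000

noncomputable section

universe u

/-- A rank-`r` graph: a countable small category whose morphisms form `Λ`, objects being
identified with degree-zero morphisms, equipped with a degree functor into `ℕ^r`
satisfying the unique factorisation property. -/
structure KGraph (r : ℕ) where
  Λ : Type
  countable : Countable Λ
  src : Λ → Λ
  tgt : Λ → Λ
  deg : Λ → Fin r → ℕ
  comp : Λ → Λ → Λ
  deg_src : ∀ l, deg (src l) = 0
  deg_tgt : ∀ l, deg (tgt l) = 0
  src_eq_self : ∀ l, deg l = 0 → src l = l
  tgt_eq_self : ∀ l, deg l = 0 → tgt l = l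
  comp_src_self : ∀ l, comp l (src l) = l
  tgt_comp_self : ∀ l, comp (tgt l) l = l
  src_comp : ∀ l m, src l = tgt m → src (comp l m) = src m
  tgt_comp : ∀ l m, src l = tgt m → tgt (comp l m) = tgt l
  deg_comp : ∀ l m, src l = tgt m → deg (comp l m) = deg l + deg m
  comp_assoc : ∀ l m n, src l = tgt m → src m = tgt n →
    comp (comp l m) n = comp l (comp m n)
  factorisation : ∀ (l : Λ) (m n : Fin r → ℕ), deg l = m + n →
    ∃! p : Λ × Λ, deg p.1 = m ∧ deg p.2 = n ∧ src p.1 = tgt p.2 ∧ comp p.1 p.2 = l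

namespace KGraph

variable {r : ℕ} (K : KGraph r)

/-- `|λ|`, the total degree of a morphism. -/
def degSum (l : K.Λ) : ℕ := ∑ j, K.deg l j

/-- The vertices `Λ⁰`, i.e. the degree-zero morphisms. -/
def IsVertex (l : K.Λ) : Prop := K.deg l = 0

/-- The pairs `(α, β)` describing the elements `μα = νβ` of `MCE(μ, ν)`. -/
def MCEPair (μ ν : K.Λ) (p : K.Λ × K.Λ) : Prop :=
  K.src μ = K.tgt p.1 ∧ K.src ν = K.tgt p.2 ∧ K.comp μ p.1 = K.comp ν p.2 ∧
    K.deg (K.comp μ p.1) = K.deg μ ⊔ K.deg ν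

/-- `Λ` is finitely aligned. -/
def FinitelyAligned : Prop := ∀ μ ν : K.Λ, {p : K.Λ × K.Λ | K.MCEPair μ ν p}.Finite

/-- `Λ` is row-finite. -/
def RowFinite : Prop :=
  ∀ (n : Fin r → ℕ) (a : K.Λ), {l : K.Λ | K.deg l = n ∧ K.tgt l = a}.Finite

/-- `Λ` is a finite graph: each `Λ^n` is finite. -/
def FiniteGraph : Prop := ∀ n : Fin r → ℕ, {l : K.Λ | K.deg l = n}.Finite

/-- `Λ` has no sources. -/
def NoSources : Prop :=
  ∀ a : K.Λ, K.IsVertex a → ∀ n : Fin r → ℕ, ∃ l, K.deg l = n ∧ K.tgt l = a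

/-- `Λ` is cofinal. -/
def Cofinal : Prop := ∀ a : K.Λ, K.IsVertex a → ∃ l, K.deg l ≠ 0 ∧ K.tgt l = a

end KGraph

section Families

variable {r : ℕ} (K : KGraph r)
variable {H : Type u} [NormedAddCommGroup H] [InnerProductSpace ℂ H] [CompleteSpace H]

/-- A `Λ`-contraction on a Hilbert space `H`. -/
def IsLambdaContraction (V : K.Λ → H →L[ℂ] H) : Prop :=
  (∀ l m, K.src l ≠ K.tgt m → V l ∘L V m = 0) ∧
  (∀ l m, K.src l = K.tgt m → V l ∘L V m = V (K.comp l m)) ∧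
  (∀ (n : Fin r → ℕ) (F : Finset K.Λ), (∀ l ∈ F, K.deg l = n) →
    ((1 : H →L[ℂ] H) - ∑ l ∈ F, V l ∘L adjoint (V l)).IsPositive) ∧
  (∀ a, K.IsVertex a → IsSelfAdjoint (V a) ∧ V a ∘L V a = V a) ∧
  (∀ ξ : H, HasSum (fun a : {a : K.Λ // K.IsVertex a} => V a.1 ξ) ξ)

/-- A `Λ`-isometry on a Hilbert space `H`. -/
def IsLambdaIsometry (V : K.Λ → H →L[ℂ] H) : Prop :=
  IsLambdaContraction K V ∧
  ∀ (n : Fin r → ℕ) (ξ : H),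
    HasSum (fun l : {l : K.Λ // K.deg l = n} => V l.1 (adjoint (V l.1) ξ)) ξ

/-- `D` is the defect operator `Δ_s(V)` (a strong-operator-topology sum). -/
def IsDefectOperator (V : K.Λ → H →L[ℂ] H) (s : ℝ) (D : H →L[ℂ] H) : Prop :=
  ∀ ξ : H, HasSum
    (fun m : {m : K.Λ // K.deg m ≤ 1} =>
      (((-(s ^ 2)) ^ K.degSum m.1 : ℝ) : ℂ) • V m.1 (adjoint (V m.1) ξ)) (D ξ)

/-- The Popescu condition for a `Λ`-contraction. -/
def PopescuCondition (V : K.Λ → H →L[ℂ] H) : Prop :=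
  ∃ ρ ∈ Set.Ioo (0 : ℝ) 1, ∀ s ∈ Set.Ioo ρ 1,
    ∃ D : H →L[ℂ] H, IsDefectOperator K V s D ∧ D.IsPositive

/-- A Toeplitz-Cuntz-Krieger `Λ`-family. -/
def IsTCKFamily (W : K.Λ → H →L[ℂ] H) : Prop :=
  (∀ l, W l ∘L adjoint (W l) ∘L W l = W l) ∧
  (∀ a, K.IsVertex a → IsSelfAdjoint (W a) ∧ W a ∘L W a = W a) ∧
  (∀ a b, K.IsVertex a → K.IsVertex b → a ≠ b → W a ∘L W b = 0) ∧
  (∀ l m, K.src l = K.tgt m → W l ∘L W m = W (K.comp l m)) ∧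
  (∀ l, adjoint (W l) ∘L W l = W (K.src l)) ∧
  (∀ n : Fin r → ℕ, n ≠ 0 → ∀ a, K.IsVertex a → ∀ F : Finset K.Λ,
    (∀ l ∈ F, K.deg l = n ∧ K.tgt l = a) →
    (W a - ∑ l ∈ F, W l ∘L adjoint (W l)).IsPositive) ∧
  (∀ μ ν : K.Λ, ∀ ξ : H,
    HasSum (fun p : {p : K.Λ × K.Λ // K.MCEPair μ ν p} => W p.1.1 (adjoint (W p.1.2) ξ))
      (adjoint (W μ) (W ν ξ)))

/-- A Cuntz-Pimsner `Λ`-family. -/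
def IsCPFamily (W : K.Λ → H →L[ℂ] H) : Prop :=
  IsTCKFamily K W ∧
  ∀ n : Fin r → ℕ, n ≠ 0 → ∀ a, K.IsVertex a → ∀ ξ : H,
    HasSum (fun l : {l : K.Λ // K.deg l = n ∧ K.tgt l = a} => W l.1 (adjoint (W l.1) ξ))
      (W a ξ)

end Families

section Creation

variable {r : ℕ}

/-- The Fock space `ℓ²(Λ)` of a higher-rank graph. -/
abbrev FockSpace (K : KGraph r) : Type := lp (fun _ : K.Λ => ℂ) 2

/-- `L` is the family of creation operators on `ℓ²(Λ)`:
`L_λ δ_μ = δ_{λμ}` if `s(λ) = r(μ)` and `L_λ δ_μ = 0` otherwise. -/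
def IsCreationFamily (K : KGraph r) [DecidableEq K.Λ]
    (L : K.Λ → FockSpace K →L[ℂ] FockSpace K) : Prop :=
  ∀ l m : K.Λ,
    (K.src l = K.tgt m → L l (lp.single 2 m 1) = lp.single 2 (K.comp l m) 1) ∧
    (K.src l ≠ K.tgt m → L l (lp.single 2 m 1) = 0)

end Creation

/-- A map from a C*-algebra into `B(H)` is completely positive: it sends every positive
`k × k` matrix over `A` (equivalently, every matrix of the form `b* b`) to a positive
operator matrix on `H^k`. -/
def IsCompletelyPositiveMap {A : Type u} [NonUnitalNormedRing A] [StarRing A]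
    {H : Type u} [NormedAddCommGroup H] [InnerProductSpace ℂ H]
    (Θ : A → (H →L[ℂ] H)) : Prop :=
  ∀ (k : ℕ) (b : Matrix (Fin k) (Fin k) A) (v : Fin k → H),
    0 ≤ ∑ i, ∑ j, (inner ℂ (v i) (Θ ((b.conjTranspose * b) i j) (v j)) : ℂ)

open scoped InnerProductSpace
set_option linter.unusedSectionVars false
set_option linter.unusedVariables false

section StinespringAux

variable {A : Type u} [NormedRing A] [StarRing A] [CStarRing A] [NormedAlgebra ℂ A]
    [StarModule ℂ A] [CompleteSpace A]
variable {H : Type u} [NormedAddCommGroup H] [InnerProductSpace ℂ H] [CompleteSpace H]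
variable {K : Type u} [NormedAddCommGroup K] [InnerProductSpace ℂ K] [CompleteSpace K]

def srnVec (π : A →⋆ₐ[ℂ] (K →L[ℂ] K)) (V : H →L[ℂ] K) {k : ℕ}
    (a : Fin k → A) (ξ : Fin k → H) : K := ∑ i, π (a i) (V (ξ i))

def srnB (Θ : A → (H →L[ℂ] H)) {k m : ℕ} (a : Fin k → A) (ξ : Fin k → H)
    (b : Fin m → A) (η : Fin m → H) : ℂ :=
  ∑ i, ∑ j, ⟪ξ i, Θ (star (a i) * b j) (η j)⟫_ℂ

variable (π : A →⋆ₐ[ℂ] (K →L[ℂ] K)) (V : H →L[ℂ] K) (Θ : A → (H →L[ℂ] H))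

lemma srnVec_single (a : A) (ξ : H) :
    srnVec π V (fun _ : Fin 1 => a) (fun _ => ξ) = π a (V ξ) := by
  simp [srnVec]

lemma srnVec_append {k k'} (a : Fin k → A) (ξ : Fin k → H) (a' : Fin k' → A) (ξ' : Fin k' → H) :
    srnVec π V (Fin.append a a') (Fin.append ξ ξ') = srnVec π V a ξ + srnVec π V a' ξ' := by
  simp [srnVec, Fin.sum_univ_add]

lemma srnVec_smul {k} (a : Fin k → A) (ξ : Fin k → H) (c : ℂ) :
    srnVec π V a (c • ξ) = c • srnVec π V a ξ := by
  simp [srnVec, Finset.smul_sum]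

lemma srnB_single (a b : A) (ξ η : H) :
    srnB Θ (fun _ : Fin 1 => a) (fun _ => ξ) (fun _ : Fin 1 => b) (fun _ => η)
      = ⟪ξ, Θ (star a * b) η⟫_ℂ := by
  simp [srnB]

lemma srnB_append_left {k k' m} (a : Fin k → A) (ξ : Fin k → H) (a' : Fin k' → A)
    (ξ' : Fin k' → H) (b : Fin m → A) (η : Fin m → H) :
    srnB Θ (Fin.append a a') (Fin.append ξ ξ') b η = srnB Θ a ξ b η + srnB Θ a' ξ' b η := by
  simp [srnB, Fin.sum_univ_add]

lemma srnB_append_right {k m m'} (a : Fin k → A) (ξ : Fin k → H) (b : Fin m → A)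
    (η : Fin m → H) (b' : Fin m' → A) (η' : Fin m' → H) :
    srnB Θ a ξ (Fin.append b b') (Fin.append η η') = srnB Θ a ξ b η + srnB Θ a ξ b' η' := by
  simp [srnB, Fin.sum_univ_add, Finset.sum_add_distrib]

lemma srnB_smul_left {k m} (a : Fin k → A) (ξ : Fin k → H) (b : Fin m → A) (η : Fin m → H)
    (c : ℂ) : srnB Θ a (c • ξ) b η = (starRingEnd ℂ) c * srnB Θ a ξ b η := by
  simp [srnB, inner_smul_left, Finset.mul_sum, mul_comm]

lemma srnB_smul_right {k m} (a : Fin k → A) (ξ : Fin k → H) (b : Fin m → A) (η : Fin m → H)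
    (c : ℂ) : srnB Θ a ξ b (c • η) = c * srnB Θ a ξ b η := by
  simp [srnB, inner_smul_right, Finset.mul_sum]

lemma srnB_sub (Θ' : A → (H →L[ℂ] H)) {k m} (a : Fin k → A) (ξ : Fin k → H) (b : Fin m → A)
    (η : Fin m → H) :
    srnB (fun x => Θ x - Θ' x) a ξ b η = srnB Θ a ξ b η - srnB Θ' a ξ b η := by
  simp [srnB, inner_sub_right, Finset.sum_sub_distrib]

lemma srn_cp_family (hΘ : IsCompletelyPositiveMap Θ) {k} (a : Fin k → A) (ξ : Fin k → H) :
    0 ≤ srnB Θ a ξ a ξ := by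
  cases k with
  | zero => simp [srnB]
  | succ n =>
    let M : Matrix (Fin (n+1)) (Fin (n+1)) A := Matrix.of fun l i => if l = 0 then a i else 0
    have h := hΘ (n + 1) M ξ
    have hmat : ∀ i j, (M.conjTranspose * M) i j = star (a i) * a j := by
      intro i j
      simp [M, Matrix.mul_apply, Matrix.conjTranspose_apply, apply_ite, ite_mul,
        Finset.sum_ite_eq]
    simp only [hmat] at h
    exact h

lemma srn_herm (hΘ : IsCompletelyPositiveMap Θ) (a b : A) (ξ η : H) :
    ⟪ξ, Θ (star a * b) η⟫_ℂ = (starRingEnd ℂ) ⟪η, Θ (star b * a) ξ⟫_ℂ := by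
  set z := ⟪ξ, Θ (star a * b) η⟫_ℂ with hz
  set w := ⟪η, Θ (star b * a) ξ⟫_ℂ with hw
  have hd1 := srn_cp_family Θ hΘ (fun _ : Fin 1 => a) (fun _ => ξ)
  have hd2 := srn_cp_family Θ hΘ (fun _ : Fin 1 => b) (fun _ => η)
  rw [srnB_single] at hd1 hd2
  have h1 := srn_cp_family Θ hΘ ![a, b] ![ξ, η]
  have h2 := srn_cp_family Θ hΘ ![a, b] ![ξ, Complex.I • η]
  have e1 : srnB Θ ![a, b] ![ξ, η] ![a, b] ![ξ, η]
      = ⟪ξ, Θ (star a * a) ξ⟫_ℂ + z + (w + ⟪η, Θ (star b * b) η⟫_ℂ) := by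
    simp [srnB, Fin.sum_univ_two, hz, hw]
  have e2 : srnB Θ ![a, b] ![ξ, Complex.I • η] ![a, b] ![ξ, Complex.I • η]
      = ⟪ξ, Θ (star a * a) ξ⟫_ℂ + Complex.I * z +
        ((starRingEnd ℂ) Complex.I * w +
          (starRingEnd ℂ) Complex.I * (Complex.I * ⟪η, Θ (star b * b) η⟫_ℂ)) := by
    simp [srnB, Fin.sum_univ_two, hz, hw, inner_smul_left, inner_smul_right]
    try ring
  rw [e1] at h1; rw [e2] at h2
  rw [Complex.nonneg_iff] at h1 h2 hd1 hd2
  have h1im := h1.2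
  have h2im := h2.2
  simp [Complex.ext_iff, Complex.add_im, Complex.mul_im, Complex.conj_re, Complex.conj_im,
    ← hd1.2, ← hd2.2] at h1im h2im ⊢
  constructor <;> nlinarith [h1im, h2im]

lemma srnB_conj (hΘ : IsCompletelyPositiveMap Θ) {k m} (a : Fin k → A) (ξ : Fin k → H)
    (b : Fin m → A) (η : Fin m → H) :
    srnB Θ b η a ξ = (starRingEnd ℂ) (srnB Θ a ξ b η) := by
  rw [srnB, srnB]
  have hpt : ∀ (i : Fin m) (j : Fin k), ⟪η i, Θ (star (b i) * a j) (ξ j)⟫_ℂ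
      = (starRingEnd ℂ) ⟪ξ j, Θ (star (a j) * b i) (η i)⟫_ℂ :=
    fun i j => srn_herm Θ hΘ (b i) (a j) (η i) (ξ j)
  simp only [hpt, ← map_sum]
  exact congrArg _ Finset.sum_comm

lemma srn_cs_scalar {q1 q2 : ℝ} {z : ℂ}
    (hq2 : 0 ≤ q2) (h : ∀ c : ℂ, 0 ≤ q1 + 2 * (c * z).re + ‖c‖ ^ 2 * q2) :
    ‖z‖ ^ 2 ≤ q1 * q2 := by
  have hq1 : 0 ≤ q1 := by simpa using h 0
  have hkey : ∀ t : ℝ, 0 ≤ q1 - 2 * t * ‖z‖ ^ 2 + t ^ 2 * ‖z‖ ^ 2 * q2 := by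
    intro t
    have := h ((-t : ℝ) * (starRingEnd ℂ) z)
    have e1 : (((-t : ℝ) * (starRingEnd ℂ) z : ℂ) * z).re = -t * ‖z‖ ^ 2 := by
      have h' : (((-t : ℝ) * (starRingEnd ℂ) z : ℂ) * z) = ((-t * ‖z‖ ^ 2 : ℝ) : ℂ) := by
        rw [mul_assoc, mul_comm ((starRingEnd ℂ) z) z, Complex.mul_conj,
          Complex.normSq_eq_norm_sq]
        push_cast
        ring
      rw [h', Complex.ofReal_re]
    have e2 : ‖((-t : ℝ) * (starRingEnd ℂ) z : ℂ)‖ ^ 2 = t ^ 2 * ‖z‖ ^ 2 := by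
      rw [norm_mul, mul_pow, RCLike.norm_conj, Complex.norm_real]
      simp [Real.norm_eq_abs, sq_abs]
    rw [e1, e2] at this
    linarith [this]
  rcases eq_or_lt_of_le (norm_nonneg z) with hz | hz
  · rw [← hz]
    simpa using mul_nonneg hq1 hq2
  have hn : (0:ℝ) < ‖z‖ ^ 2 := by positivity
  set u := ‖z‖ ^ 2 with hu
  clear_value u
  rcases eq_or_lt_of_le hq2 with hq2' | hq2'
  · exfalso
    have h1 := hkey ((q1 + u) / (2 * u))
    rw [← hq2'] at h1
    have hne : u ≠ 0 := ne_of_gt hn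
    have heq : 2 * ((q1 + u) / (2 * u)) * u = q1 + u := by
      field_simp
      try ring
    nlinarith [h1, heq, hn]
  · have h1 := hkey (1 / q2)
    have h2 : q1 - 2 * (1 / q2) * u + (1 / q2) ^ 2 * u * q2 = q1 - u / q2 := by
      field_simp
      try ring
    rw [h2, sub_nonneg, div_le_iff₀ hq2'] at h1
    exact h1

lemma srnB_cs (hΘ : IsCompletelyPositiveMap Θ) {k m} (a : Fin k → A) (ξ : Fin k → H)
    (b : Fin m → A) (η : Fin m → H) :
    ‖srnB Θ a ξ b η‖ ^ 2 ≤ (srnB Θ a ξ a ξ).re * (srnB Θ b η b η).re := by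
  have hGG := srn_cp_family Θ hΘ b η
  rw [Complex.nonneg_iff] at hGG
  apply srn_cs_scalar hGG.1
  intro c
  have hT : srnB Θ (Fin.append a b) (Fin.append ξ (c • η)) (Fin.append a b) (Fin.append ξ (c • η))
      = srnB Θ a ξ a ξ + (c * srnB Θ a ξ b η + (starRingEnd ℂ) (c * srnB Θ a ξ b η))
        + ((‖c‖ ^ 2 : ℝ) : ℂ) * srnB Θ b η b η := by
    simp only [srnB_append_left, srnB_append_right, srnB_smul_left, srnB_smul_right,
      srnB_conj Θ hΘ a ξ b η, map_mul]
    have hcc : ((‖c‖ ^ 2 : ℝ) : ℂ) = (starRingEnd ℂ) c * c := by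
      rw [mul_comm, Complex.mul_conj, Complex.normSq_eq_norm_sq]
    rw [hcc]
    ring
  have h := srn_cp_family Θ hΘ (Fin.append a b) (Fin.append ξ (c • η))
  rw [hT, Complex.nonneg_iff] at h
  have h' := h.1
  simp only [Complex.add_re, Complex.conj_re, Complex.re_ofReal_mul] at h'
  linarith [h']

lemma srnB_norm_le (hΘ : IsCompletelyPositiveMap Θ)
    (hub : ∀ {n : ℕ} (u : Fin n → A) (v : Fin n → H),
      (srnB Θ u v u v).re ≤ ‖srnVec π V u v‖ ^ 2)
    {k m} (a : Fin k → A) (ξ : Fin k → H) (b : Fin m → A) (η : Fin m → H) :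
    ‖srnB Θ a ξ b η‖ ≤ ‖srnVec π V a ξ‖ * ‖srnVec π V b η‖ := by
  have hcs := srnB_cs Θ hΘ a ξ b η
  have h1 := hub a ξ
  have h2 := hub b η
  have hq1 := (Complex.nonneg_iff.mp (srn_cp_family Θ hΘ a ξ)).1
  have hq2 := (Complex.nonneg_iff.mp (srn_cp_family Θ hΘ b η)).1
  nlinarith [norm_nonneg (srnB Θ a ξ b η), norm_nonneg (srnVec π V a ξ),
    norm_nonneg (srnVec π V b η),
    mul_nonneg (norm_nonneg (srnVec π V a ξ)) (norm_nonneg (srnVec π V b η)),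
    sq_nonneg (‖srnVec π V a ξ‖ * ‖srnVec π V b η‖ - ‖srnB Θ a ξ b η‖),
    mul_le_mul h1 h2 hq2 (sq_nonneg ‖srnVec π V a ξ‖)]

lemma srnB_phi (Φ : A →ₗ[ℂ] (H →L[ℂ] H)) (hΦ : ∀ x : A, Φ x = adjoint V ∘L (π x ∘L V))
    {k m} (a : Fin k → A) (ξ : Fin k → H) (b : Fin m → A) (η : Fin m → H) :
    srnB (fun x => Φ x) a ξ b η = ⟪srnVec π V a ξ, srnVec π V b η⟫_ℂ := by
  rw [srnVec, srnVec, sum_inner, srnB]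
  refine Finset.sum_congr rfl fun i _ => ?_
  rw [inner_sum]
  refine Finset.sum_congr rfl fun j _ => ?_
  rw [hΦ]
  simp only [comp_apply]
  rw [adjoint_inner_right, map_mul π, ContinuousLinearMap.mul_apply, map_star π, star_eq_adjoint,
    adjoint_inner_right]

lemma srn_rep (x : K)
    (hx : x ∈ Submodule.span ℂ {y : K | ∃ (a : A) (ξ : H), y = π a (V ξ)}) :
    ∃ (k : ℕ) (a : Fin k → A) (ξ : Fin k → H), srnVec π V a ξ = x := by
  induction hx using Submodule.span_induction with
  | mem x h =>
    obtain ⟨a, ξ, rfl⟩ := h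
    exact ⟨1, _, _, srnVec_single π V a ξ⟩
  | zero => exact ⟨0, Fin.elim0, Fin.elim0, by simp [srnVec]⟩
  | add x y hx hy ihx ihy =>
    obtain ⟨k, a, ξ, rfl⟩ := ihx
    obtain ⟨m, b, η, rfl⟩ := ihy
    exact ⟨k + m, Fin.append a b, Fin.append ξ η, srnVec_append π V a ξ b η⟩
  | smul c x hx ih =>
    obtain ⟨k, a, ξ, rfl⟩ := ih
    exact ⟨k, a, c • ξ, srnVec_smul π V a ξ c⟩

lemma srn_vec_mem {k} (a : Fin k → A) (ξ : Fin k → H) :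
    srnVec π V a ξ ∈ Submodule.span ℂ {y : K | ∃ (a : A) (ξ : H), y = π a (V ξ)} :=
  Submodule.sum_mem _ fun i _ => Submodule.subset_span ⟨a i, ξ i, rfl⟩

lemma srn_ext_vec
    (hmin : Dense ((Submodule.span ℂ {x : K | ∃ (a : A) (ξ : H), x = π a (V ξ)} :
      Submodule ℂ K) : Set K))
    (w w' : K) (h : ∀ (a : A) (ξ : H), ⟪π a (V ξ), w⟫_ℂ = ⟪π a (V ξ), w'⟫_ℂ) : w = w' := by
  have hS : ∀ x ∈ (Submodule.span ℂ {x : K | ∃ (a : A) (ξ : H), x = π a (V ξ)} :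
      Submodule ℂ K), ⟪x, w⟫_ℂ = ⟪x, w'⟫_ℂ := by
    intro x hx
    induction hx using Submodule.span_induction with
    | mem x hx =>
      obtain ⟨a, ξ, rfl⟩ := hx
      exact h a ξ
    | zero => simp
    | add x y _ _ ihx ihy => simp [inner_add_left, ihx, ihy]
    | smul c x _ ih => simp [inner_smul_left, ih]
  have hcl : IsClosed {x : K | ⟪x, w⟫_ℂ = ⟪x, w'⟫_ℂ} :=
    isClosed_eq (continuous_id.inner continuous_const) (continuous_id.inner continuous_const)
  have hsub := hcl.closure_subset_iff.mpr (fun x hx => hS x hx)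
  refine ext_inner_left ℂ fun x => ?_
  exact hsub (by rw [hmin.closure_eq]; trivial)

lemma srn_ext_op
    (hmin : Dense ((Submodule.span ℂ {x : K | ∃ (a : A) (ξ : H), x = π a (V ξ)} :
      Submodule ℂ K) : Set K))
    (T T' : K →L[ℂ] K) (h : ∀ (b : A) (η : H), T (π b (V η)) = T' (π b (V η))) : T = T' := by
  have hS : ∀ x ∈ (Submodule.span ℂ {x : K | ∃ (a : A) (ξ : H), x = π a (V ξ)} :
      Submodule ℂ K), T x = T' x := by
    intro x hx
    induction hx using Submodule.span_induction with
    | mem x hx =>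
      obtain ⟨a, ξ, rfl⟩ := hx
      exact h a ξ
    | zero => simp
    | add x y _ _ ihx ihy => simp [map_add, ihx, ihy]
    | smul c x _ ih => simp [map_smul, ih]
  have hcl : IsClosed {x : K | T x = T' x} := isClosed_eq T.continuous T'.continuous
  have hsub := hcl.closure_subset_iff.mpr (fun x hx => hS x hx)
  ext x
  exact hsub (by rw [hmin.closure_eq]; trivial)

lemma srn_ext_op' 
    (hmin : Dense ((Submodule.span ℂ {x : K | ∃ (a : A) (ξ : H), x = π a (V ξ)} :
      Submodule ℂ K) : Set K))
    (T T' : K →L[ℂ] K)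
    (h : ∀ (a : A) (ξ : H) (b : A) (η : H),
      ⟪π a (V ξ), T (π b (V η))⟫_ℂ = ⟪π a (V ξ), T' (π b (V η))⟫_ℂ) : T = T' :=
  srn_ext_op π V hmin T T' fun b η => srn_ext_vec π V hmin _ _ fun a ξ => h a ξ b η

lemma srn_exists_X
    (hmin : Dense ((Submodule.span ℂ {x : K | ∃ (a : A) (ξ : H), x = π a (V ξ)} :
      Submodule ℂ K) : Set K))
    (hΘ : IsCompletelyPositiveMap Θ)
    (hub : ∀ {n : ℕ} (u : Fin n → A) (v : Fin n → H),
      (srnB Θ u v u v).re ≤ ‖srnVec π V u v‖ ^ 2) :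
    ∃ X : K →L[ℂ] K, ∀ (a b : A) (ξ η : H),
      ⟪π a (V ξ), X (π b (V η))⟫_ℂ = ⟪ξ, Θ (star a * b) η⟫_ℂ := by
  have hrep : ∀ u : (Submodule.span ℂ {x : K | ∃ (a : A) (ξ : H), x = π a (V ξ)} :
      Submodule ℂ K), ∃ (k : ℕ) (a : Fin k → A) (ξ : Fin k → H),
      srnVec π V a ξ = (u : K) := fun u => srn_rep π V u u.2
  choose rk ra rξ hrepeq using hrep
  -- independence lemmas
  have hzero : ∀ {k} (a : Fin k → A) (ξ : Fin k → H), srnVec π V a ξ = 0 →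
      ∀ {m} (b : Fin m → A) (η : Fin m → H), srnB Θ a ξ b η = 0 := by
    intro k a ξ hv m b η
    have h := srnB_norm_le π V Θ hΘ hub a ξ b η
    rw [hv, norm_zero, zero_mul] at h
    exact norm_le_zero_iff.mp h
  have hindepL : ∀ {k k'} (a : Fin k → A) (ξ : Fin k → H) (a' : Fin k' → A) (ξ' : Fin k' → H),
      srnVec π V a ξ = srnVec π V a' ξ' →
      ∀ {m} (b : Fin m → A) (η : Fin m → H), srnB Θ a ξ b η = srnB Θ a' ξ' b η := by
    intro k k' a ξ a' ξ' hv m b η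
    have hv0 : srnVec π V (Fin.append a a') (Fin.append ξ ((-1 : ℂ) • ξ')) = 0 := by
      rw [srnVec_append, srnVec_smul, hv]
      simp
    have h0 := hzero _ _ hv0 b η
    rw [srnB_append_left, srnB_smul_left] at h0
    simp only [map_neg, map_one] at h0
    linear_combination h0
  have hindepR : ∀ {m m'} (b : Fin m → A) (η : Fin m → H) (b' : Fin m' → A) (η' : Fin m' → H),
      srnVec π V b η = srnVec π V b' η' →
      ∀ {k} (a : Fin k → A) (ξ : Fin k → H), srnB Θ a ξ b η = srnB Θ a ξ b' η' := by
    intro m m' b η b' η' hv k a ξ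
    have h1 := hindepL b η b' η' hv a ξ
    rw [srnB_conj Θ hΘ a ξ b η, srnB_conj Θ hΘ a ξ b' η'] at h1
    exact (starRingEnd ℂ).injective h1
  -- density data
  have hde : DenseRange ((Submodule.span ℂ {x : K | ∃ (a : A) (ξ : H), x = π a (V ξ)} :
      Submodule ℂ K).subtypeL) := by
    show Dense (Set.range (Subtype.val :
      (Submodule.span ℂ {x : K | ∃ (a : A) (ξ : H), x = π a (V ξ)} : Submodule ℂ K) → K))
    rw [Subtype.range_coe]
    exact hmin
  have hue : IsUniformInducing ((Submodule.span ℂ {x : K | ∃ (a : A) (ξ : H), x = π a (V ξ)} :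
      Submodule ℂ K).subtypeL) := isUniformEmbedding_subtype_val.toIsUniformInducing
  -- existence of representing vectors for the sesquilinear form
  have hW : ∀ (m : ℕ) (b : Fin m → A) (η : Fin m → H), ∃ w : K,
      (∀ (k : ℕ) (a : Fin k → A) (ξ : Fin k → H),
        ⟪srnVec π V a ξ, w⟫_ℂ = srnB Θ a ξ b η) ∧ ‖w‖ ≤ ‖srnVec π V b η‖ := by
    intro m b η
    let f0 : (Submodule.span ℂ {x : K | ∃ (a : A) (ξ : H), x = π a (V ξ)} :
        Submodule ℂ K) →ₗ[ℂ] ℂ :=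
      { toFun := fun u => (starRingEnd ℂ) (srnB Θ (ra u) (rξ u) b η)
        map_add' := by
          intro u v
          have hv : srnVec π V (ra (u + v)) (rξ (u + v))
              = srnVec π V (Fin.append (ra u) (ra v)) (Fin.append (rξ u) (rξ v)) := by
            rw [srnVec_append, hrepeq, hrepeq, hrepeq]
            rfl
          show (starRingEnd ℂ) _ = (starRingEnd ℂ) _ + (starRingEnd ℂ) _
          rw [hindepL _ _ _ _ hv b η, srnB_append_left, map_add]
        map_smul' := by
          intro c u
          have hv : srnVec π V (ra (c • u)) (rξ (c • u))
              = srnVec π V (ra u) (c • rξ u) := by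
            rw [srnVec_smul, hrepeq, hrepeq]
            rfl
          show (starRingEnd ℂ) _ = (RingHom.id ℂ) c • (starRingEnd ℂ) _
          rw [hindepL _ _ _ _ hv b η, srnB_smul_left]
          simp [map_mul, mul_comm] }
    have hf0bound : ∀ u, ‖f0 u‖ ≤ ‖srnVec π V b η‖ * ‖u‖ := by
      intro u
      have h := srnB_norm_le π V Θ hΘ hub (ra u) (rξ u) b η
      rw [hrepeq] at h
      have hn : ‖f0 u‖ = ‖srnB Θ (ra u) (rξ u) b η‖ := by
        simp [f0]
      rw [hn]
      calc ‖srnB Θ (ra u) (rξ u) b η‖ ≤ ‖(u : K)‖ * ‖srnVec π V b η‖ := h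
      _ = ‖srnVec π V b η‖ * ‖u‖ := by rw [mul_comm]; rfl
    let f := f0.mkContinuous ‖srnVec π V b η‖ hf0bound
    let g := f.extend (Submodule.span ℂ {x : K | ∃ (a : A) (ξ : H), x = π a (V ξ)} : Submodule ℂ K).subtypeL
    have hgeq : ∀ u : (Submodule.span ℂ {x : K | ∃ (a : A) (ξ : H), x = π a (V ξ)} :
        Submodule ℂ K), g (u : K) = f0 u := fun u =>
      ContinuousLinearMap.extend_eq f hde hue u
    have hgnorm : ∀ x : K, ‖g x‖ ≤ ‖srnVec π V b η‖ * ‖x‖ := by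
      have hcl : IsClosed {x : K | ‖g x‖ ≤ ‖srnVec π V b η‖ * ‖x‖} :=
        isClosed_le g.continuous.norm (continuous_const.mul continuous_norm)
      have hmem : ∀ y ∈ ((Submodule.span ℂ {x : K | ∃ (a : A) (ξ : H), x = π a (V ξ)} :
          Submodule ℂ K) : Set K), ‖g y‖ ≤ ‖srnVec π V b η‖ * ‖y‖ := by
        intro y hy
        have h1 : g y = f0 ⟨y, hy⟩ := hgeq ⟨y, hy⟩
        calc ‖g y‖ = ‖f0 ⟨y, hy⟩‖ := by rw [h1]
        _ ≤ ‖srnVec π V b η‖ * ‖(⟨y, hy⟩ :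
            (Submodule.span ℂ {x : K | ∃ (a : A) (ξ : H), x = π a (V ξ)} :
              Submodule ℂ K))‖ := hf0bound _
        _ = ‖srnVec π V b η‖ * ‖y‖ := rfl
      intro x
      exact (hcl.closure_subset_iff.mpr hmem) (by rw [hmin.closure_eq]; trivial)
    refine ⟨(InnerProductSpace.toDual ℂ K).symm g, ?_, ?_⟩
    · intro k a ξ
      have h1 : ⟪(InnerProductSpace.toDual ℂ K).symm g, srnVec π V a ξ⟫_ℂ
          = g (srnVec π V a ξ) := InnerProductSpace.toDual_symm_apply
      have h2 : g (srnVec π V a ξ) = f0 ⟨srnVec π V a ξ, srn_vec_mem π V a ξ⟩ :=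
        hgeq ⟨_, srn_vec_mem π V a ξ⟩
      have h3 : f0 (⟨srnVec π V a ξ, srn_vec_mem π V a ξ⟩ :
          (Submodule.span ℂ {x : K | ∃ (a : A) (ξ : H), x = π a (V ξ)} : Submodule ℂ K))
          = (starRingEnd ℂ) (srnB Θ a ξ b η) := by
        show (starRingEnd ℂ) _ = (starRingEnd ℂ) _
        rw [hindepL _ _ a ξ (hrepeq _) b η]
      rw [← inner_conj_symm, h1, h2, h3]
      simp
    · rw [LinearIsometryEquiv.norm_map]
      exact ContinuousLinearMap.opNorm_le_bound _ (norm_nonneg _) hgnorm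
  choose W hW1 hW2 using hW
  -- the operator on the span
  let X0 : (Submodule.span ℂ {x : K | ∃ (a : A) (ξ : H), x = π a (V ξ)} :
      Submodule ℂ K) →ₗ[ℂ] K :=
    { toFun := fun u => W (rk u) (ra u) (rξ u)
      map_add' := by
        intro u v
        refine srn_ext_vec π V hmin _ _ fun a ξ => ?_
        rw [← srnVec_single π V a ξ, hW1, inner_add_right, hW1, hW1, ← srnB_append_right]
        refine hindepR _ _ _ _ ?_ _ _
        rw [hrepeq, srnVec_append, hrepeq, hrepeq]
        rfl
      map_smul' := by
        intro c u
        refine srn_ext_vec π V hmin _ _ fun a ξ => ?_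
        rw [← srnVec_single π V a ξ, hW1, inner_smul_right, hW1, ← srnB_smul_right]
        refine hindepR _ _ _ _ ?_ _ _
        rw [hrepeq, srnVec_smul, hrepeq]
        rfl }
  have hX0bound : ∀ u, ‖X0 u‖ ≤ 1 * ‖u‖ := by
    intro u
    have h := hW2 (rk u) (ra u) (rξ u)
    rw [hrepeq] at h
    calc ‖X0 u‖ ≤ ‖(u : K)‖ := h
    _ = 1 * ‖u‖ := by rw [one_mul]; rfl
  let X0c := X0.mkContinuous 1 hX0bound
  refine ⟨X0c.extend (Submodule.span ℂ {x : K | ∃ (a : A) (ξ : H), x = π a (V ξ)} : Submodule ℂ K).subtypeL, ?_⟩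
  intro a b ξ η
  have hmem : π b (V η) ∈ (Submodule.span ℂ {x : K | ∃ (a : A) (ξ : H), x = π a (V ξ)} :
      Submodule ℂ K) := Submodule.subset_span ⟨b, η, rfl⟩
  have h1 : (X0c.extend (Submodule.span ℂ {x : K | ∃ (a : A) (ξ : H), x = π a (V ξ)} : Submodule ℂ K).subtypeL) (π b (V η)) = X0 ⟨π b (V η), hmem⟩ :=
    ContinuousLinearMap.extend_eq X0c hde hue ⟨π b (V η), hmem⟩
  rw [h1]
  show ⟪π a (V ξ), W _ (ra _) (rξ _)⟫_ℂ = _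
  rw [← srnVec_single π V a ξ, hW1]
  have hv : srnVec π V (ra ⟨π b (V η), hmem⟩) (rξ ⟨π b (V η), hmem⟩)
      = srnVec π V (fun _ : Fin 1 => b) (fun _ => η) := by
    rw [hrepeq, srnVec_single]
  rw [hindepR _ _ _ _ hv _ _, srnB_single]

end StinespringAux

/-- If `Φ = V* π(·) V` is the minimal Stinespring representation of the
completely positive map `Φ` and `Φ - Ψ` is completely positive, then there is a unique
`X` in the commutant of `π(A)` with `Ψ(a) = V* X π(a) V`, and `0 ≤ X ≤ I`. -/
theorem stinespring_radon_nikodym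
    {A : Type u} [NormedRing A] [StarRing A] [CStarRing A] [NormedAlgebra ℂ A]
    [StarModule ℂ A] [CompleteSpace A]
    {H : Type u} [NormedAddCommGroup H] [InnerProductSpace ℂ H] [CompleteSpace H]
    {K : Type u} [NormedAddCommGroup K] [InnerProductSpace ℂ K] [CompleteSpace K]
    (π : A →⋆ₐ[ℂ] (K →L[ℂ] K))
    (V : H →L[ℂ] K) (hViso : ∀ ξ : H, ‖V ξ‖ = ‖ξ‖)
    (hmin : Dense ((Submodule.span ℂ {x : K | ∃ (a : A) (ξ : H), x = π a (V ξ)} :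
      Submodule ℂ K) : Set K))
    (Φ Ψ : A →ₗ[ℂ] (H →L[ℂ] H))
    (hΦ : ∀ a : A, Φ a = adjoint V ∘L (π a ∘L V))
    (hΦcp : IsCompletelyPositiveMap (fun a : A => Φ a))
    (hΨcp : IsCompletelyPositiveMap (fun a : A => Ψ a))
    (hdiff : IsCompletelyPositiveMap (fun a : A => Φ a - Ψ a)) :
    ∃ X : K →L[ℂ] K,
      (∀ a : A, X ∘L π a = π a ∘L X) ∧
      (∀ a : A, Ψ a = adjoint V ∘L (X ∘L (π a ∘L V))) ∧
      X.IsPositive ∧ ((1 : K →L[ℂ] K) - X).IsPositive ∧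
      (∀ X' : K →L[ℂ] K, (∀ a : A, X' ∘L π a = π a ∘L X') →
        (∀ a : A, Ψ a = adjoint V ∘L (X' ∘L (π a ∘L V))) → X' = X) := by
  -- the fundamental upper bound coming from complete positivity of `Φ - Ψ`
  have hub : ∀ {n : ℕ} (u : Fin n → A) (v : Fin n → H),
      (srnB (fun x : A => Ψ x) u v u v).re ≤ ‖srnVec π V u v‖ ^ 2 := by
    intro n u v
    have h0 := srn_cp_family (fun a : A => Φ a - Ψ a) hdiff u v
    have h1 : srnB (fun x : A => Φ x - Ψ x) u v u v
        = srnB (fun x : A => Φ x) u v u v - srnB (fun x : A => Ψ x) u v u v :=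
      srnB_sub (fun x : A => Φ x) (fun x : A => Ψ x) u v u v
    have h2 := srnB_phi π V Φ hΦ u v u v
    rw [h1, h2] at h0
    rw [Complex.nonneg_iff] at h0
    have h3 := h0.1
    rw [Complex.sub_re] at h3
    have h4 : (⟪srnVec π V u v, srnVec π V u v⟫_ℂ).re = ‖srnVec π V u v‖ ^ 2 := by
      have := inner_self_eq_norm_sq (𝕜 := ℂ) (srnVec π V u v)
      simpa using this
    linarith
  obtain ⟨X, hX⟩ := srn_exists_X π V (fun x : A => Ψ x) hmin hΨcp hub
  have hherm := srn_herm (fun x : A => Ψ x) hΨcp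
  -- commutation
  have hcomm : ∀ c : A, X ∘L π c = π c ∘L X := by
    intro c
    refine srn_ext_op' π V hmin _ _ fun a ξ b η => ?_
    rw [comp_apply, comp_apply]
    have hcb : π c (π b (V η)) = π (c * b) (V η) := by
      rw [map_mul, ContinuousLinearMap.mul_apply]
    have e2 : ContinuousLinearMap.adjoint (π c) (π a (V ξ)) = π (star c * a) (V ξ) := by
      rw [← ContinuousLinearMap.star_eq_adjoint, ← map_star π c, map_mul, ContinuousLinearMap.mul_apply]
    have e1 : ⟪π a (V ξ), π c (X (π b (V η)))⟫_ℂ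
        = ⟪π (star c * a) (V ξ), X (π b (V η))⟫_ℂ := by
      rw [← e2]
      exact (ContinuousLinearMap.adjoint_inner_left _ _ _).symm
    rw [hcb, hX a (c * b) ξ η, e1, hX (star c * a) b ξ η, star_mul, star_star, mul_assoc]
  -- representation of Ψ
  have hrepX : ∀ a : A, Ψ a = adjoint V ∘L (X ∘L (π a ∘L V)) := by
    intro a
    ext η
    refine ext_inner_left ℂ fun ξ => ?_
    simp only [comp_apply]
    rw [adjoint_inner_right]
    have h1 : V ξ = π 1 (V ξ) := by rw [map_one]; rfl
    rw [h1, hX 1 a ξ η, star_one, one_mul]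
  -- self-adjointness
  have hsa : IsSelfAdjoint X := by
    show star X = X
    rw [ContinuousLinearMap.star_eq_adjoint]
    refine srn_ext_op' π V hmin _ _ fun a ξ b η => ?_
    rw [ContinuousLinearMap.adjoint_inner_right, ← inner_conj_symm, hX b a η ξ,
      hX a b ξ η, hherm a b ξ η]
  -- quadratic bounds
  have hquad : ∀ x : K, 0 ≤ (⟪x, X x⟫_ℂ).re ∧ (⟪x, X x⟫_ℂ).re ≤ ‖x‖ ^ 2 := by
    have hS : ∀ y ∈ (Submodule.span ℂ {x : K | ∃ (a : A) (ξ : H), x = π a (V ξ)} :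
        Submodule ℂ K), 0 ≤ (⟪y, X y⟫_ℂ).re ∧ (⟪y, X y⟫_ℂ).re ≤ ‖y‖ ^ 2 := by
      intro y hy
      obtain ⟨k, u, v, rfl⟩ := srn_rep π V y hy
      have hXv : ⟪srnVec π V u v, X (srnVec π V u v)⟫_ℂ = srnB (fun x : A => Ψ x) u v u v := by
        rw [srnVec, map_sum, sum_inner, srnB]
        refine Finset.sum_congr rfl fun i _ => ?_
        rw [inner_sum]
        exact Finset.sum_congr rfl fun j _ => hX (u i) (u j) (v i) (v j)
      constructor
      · rw [hXv]
        exact (Complex.nonneg_iff.mp (srn_cp_family _ hΨcp u v)).1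
      · rw [hXv]
        exact hub u v
    have hc : Continuous fun x : K => (⟪x, X x⟫_ℂ).re :=
      Complex.continuous_re.comp (continuous_id.inner X.continuous)
    have hcl1 : IsClosed {x : K | 0 ≤ (⟪x, X x⟫_ℂ).re} := isClosed_le continuous_const hc
    have hcl2 : IsClosed {x : K | (⟪x, X x⟫_ℂ).re ≤ ‖x‖ ^ 2} :=
      isClosed_le hc (continuous_norm.pow 2)
    intro x
    have hx1 := (hcl1.closure_subset_iff.mpr (fun y hy => (hS y hy).1))
      (by rw [hmin.closure_eq]; trivial : x ∈ closure _)
    have hx2 := (hcl2.closure_subset_iff.mpr (fun y hy => (hS y hy).2))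
      (by rw [hmin.closure_eq]; trivial : x ∈ closure _)
    exact ⟨hx1, hx2⟩
  have hreapply : ∀ x : K, X.reApplyInnerSelf x = (⟪x, X x⟫_ℂ).re := by
    intro x
    rw [ContinuousLinearMap.reApplyInnerSelf_apply, inner_re_symm]
    simp
  have hposX : X.IsPositive := by
    refine ⟨hsa.isSymmetric, fun x => ?_⟩
    rw [hreapply x]
    exact (hquad x).1
  have hpos1X : ((1 : K →L[ℂ] K) - X).IsPositive := by
    refine ⟨((IsSelfAdjoint.one (K →L[ℂ] K)).sub hsa).isSymmetric, fun x => ?_⟩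
    have e : ((1 : K →L[ℂ] K) - X).reApplyInnerSelf x = ‖x‖ ^ 2 - (⟪x, X x⟫_ℂ).re := by
      have h6 : RCLike.re (⟪X x, x⟫_ℂ) = (⟪x, X x⟫_ℂ).re := by
        rw [inner_re_symm]
        simp
      rw [ContinuousLinearMap.reApplyInnerSelf_apply, ContinuousLinearMap.sub_apply,
        ContinuousLinearMap.one_apply, inner_sub_left, map_sub, h6]
      congr 1
      exact inner_self_eq_norm_sq (𝕜 := ℂ) x
    rw [e]
    have := (hquad x).2
    linarith
  refine ⟨X, hcomm, hrepX, hposX, hpos1X, ?_⟩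
  -- uniqueness
  intro X' hcomm' hrep'
  refine srn_ext_op' π V hmin _ _ fun a ξ b η => ?_
  have e2 : π a (V ξ) = ContinuousLinearMap.adjoint (π (star a)) (V ξ) := by
    rw [← ContinuousLinearMap.star_eq_adjoint, ← map_star π, star_star]
  have e3 : π (star a) (X' (π b (V η))) = X' (π (star a * b) (V η)) := by
    have := congrArg (fun T : K →L[ℂ] K => T (π b (V η))) (hcomm' (star a))
    simp only [comp_apply] at this
    rw [← this, map_mul, ContinuousLinearMap.mul_apply]
  calc ⟪π a (V ξ), X' (π b (V η))⟫_ℂ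
      = ⟪V ξ, π (star a) (X' (π b (V η)))⟫_ℂ := by
        rw [e2, ContinuousLinearMap.adjoint_inner_left]
    _ = ⟪V ξ, X' (π (star a * b) (V η))⟫_ℂ := by rw [e3]
    _ = ⟪ξ, adjoint V (X' (π (star a * b) (V η)))⟫_ℂ := by rw [adjoint_inner_right]
    _ = ⟪ξ, Ψ (star a * b) η⟫_ℂ := by rw [hrep' (star a * b)]; simp [comp_apply]
    _ = ⟪π a (V ξ), X (π b (V η))⟫_ℂ := (hX a b ξ η).symm
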